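/- Let {E_j} be 2×2 positive semidefinite matrices with ∑_j E_j = I. Then for every 2×2 matrix X: ∑_j ‖X E_j‖_F ≤ √2·‖X‖_F. -/

import Mathlib

open Matrix ComplexOrder

private lemma cayley2 (A : Matrix (Fin 2) (Fin 2) ℂ) :
    A * A = A.trace • A - A.det • 1 := by
  ext i j
  fin_cases i <;> fin_cases j <;>
    simp [Matrix.mul_apply, Matrix.trace, Matrix.det_fin_two, Fin.sum_univ_two,
      Matrix.one_apply] <;> ring

private lemma psd_trace_nonneg {n : Type*} [Fintype n] [DecidableEq n]
    {M : Matrix n n ℂ} (hM : M.PosSemidef) : 0 ≤ M.trace := by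
  rw [Matrix.trace]
  apply Finset.sum_nonneg
  intro i _
  exact hM.diag_nonneg

private lemma psd_det_nonneg {n : Type*} [Fintype n] [DecidableEq n]
    {M : Matrix n n ℂ} (hM : M.PosSemidef) : 0 ≤ M.det := by
  rw [hM.1.det_eq_prod_eigenvalues]
  apply Finset.prod_nonneg
  intro i _
  exact RCLike.ofReal_nonneg.mpr (hM.eigenvalues_nonneg i)

private lemma psd_trace_mul_nonneg {n : Type*} [Fintype n] [DecidableEq n]
    {A B : Matrix n n ℂ} (hA : A.PosSemidef) (hB : B.PosSemidef) :
    0 ≤ (A * B).trace := by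
  open scoped MatrixOrder Matrix.Norms.L2Operator in
  have hs : CFC.sqrt B * CFC.sqrt B = B := CFC.sqrt_mul_sqrt_self B hB.nonneg
  open scoped MatrixOrder Matrix.Norms.L2Operator in
  have hherm : (CFC.sqrt B)ᴴ = CFC.sqrt B := (CFC.sqrt_nonneg B).posSemidef.1
  have hpsd : ((CFC.sqrt B)ᴴ * A * CFC.sqrt B).PosSemidef :=
    hA.conjTranspose_mul_mul_same (CFC.sqrt B)
  have := psd_trace_nonneg hpsd
  rwa [hherm, Matrix.trace_mul_cycle, hs, Matrix.trace_mul_comm] at this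

/-- Frobenius norm of a 2×2 complex matrix. -/
noncomputable def frob (X : Matrix (Fin 2) (Fin 2) ℂ) : ℝ :=
  Real.sqrt ((Xᴴ * X).trace.re)

/-- For a single-qubit POVM `{E_j}`, `∑_j ‖X E_j‖_F ≤ √2 ‖X‖_F`. -/
theorem povm_norm_contraction {m : ℕ}
    (E : Fin m → Matrix (Fin 2) (Fin 2) ℂ)
    (hpos : ∀ j, (E j).PosSemidef) (hsum : ∑ j, E j = 1)
    (X : Matrix (Fin 2) (Fin 2) ℂ) :
    ∑ j, frob (X * E j) ≤ Real.sqrt 2 * frob X := by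
  set A := Xᴴ * X with hAdef
  have hA : A.PosSemidef := Matrix.posSemidef_conjTranspose_mul_self X
  set a : Fin m → ℝ := fun j => (E j).trace.re with ha
  set b : Fin m → ℝ := fun j => (A * E j).trace.re with hb
  have ha0 : ∀ j, 0 ≤ a j := fun j => (psd_trace_nonneg (hpos j)).1
  have hb0 : ∀ j, 0 ≤ b j := fun j => (psd_trace_mul_nonneg hA (hpos j)).1
  -- per-term bound
  have hterm : ∀ j, frob (X * E j) ≤ Real.sqrt (a j * b j) := by
    intro j
    apply Real.sqrt_le_sqrt
    have hE := hpos j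
    have hct : (X * E j)ᴴ = E j * Xᴴ := by rw [Matrix.conjTranspose_mul, hE.1.eq]
    have htr : ((X * E j)ᴴ * (X * E j)).trace
        = (E j).trace * (A * E j).trace - (E j).det * A.trace := by
      rw [hct]
      calc (E j * Xᴴ * (X * E j)).trace
          = (A * (E j * E j)).trace := by
            have hmm : E j * Xᴴ * (X * E j) = E j * (A * E j) := by
              rw [hAdef]; noncomm_ring
            rw [hmm, Matrix.trace_mul_comm, Matrix.mul_assoc]
        _ = (E j).trace * (A * E j).trace - (E j).det * A.trace := by
            rw [cayley2, Matrix.mul_sub, Matrix.mul_smul, Matrix.mul_smul,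
              Matrix.trace_sub, Matrix.trace_smul, Matrix.trace_smul, Matrix.mul_one,
              smul_eq_mul, smul_eq_mul]
    have h1 := psd_trace_nonneg (hpos j)
    have h2 := psd_trace_mul_nonneg hA (hpos j)
    have h3 := psd_det_nonneg (hpos j)
    have h4 := psd_trace_nonneg hA
    have e1 : (E j).trace.im = 0 := h1.2.symm
    have e2 : ((A * E j)).trace.im = 0 := h2.2.symm
    calc ((X * E j)ᴴ * (X * E j)).trace.re
        = a j * b j - (E j).det.re * A.trace.re - ((E j).det.im * A.trace.im) * (-1) := by
          rw [htr]; simp [Complex.sub_re, Complex.mul_re, e1, e2, ha, hb]; ring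
      _ ≤ a j * b j := by
          have e3 : (E j).det.im = 0 := h3.2.symm
          rw [e3]
          simp only [zero_mul, mul_neg, neg_zero, sub_zero]
          have := mul_nonneg h3.1 h4.1
          linarith
  have hsum_a : ∑ j, a j = 2 := by
    have : ∑ j, (E j).trace = (2 : ℂ) := by
      rw [← Matrix.trace_sum, hsum, Matrix.trace_one]
      norm_num
    calc ∑ j, a j = (∑ j, (E j).trace).re := by rw [Complex.re_sum]
      _ = 2 := by rw [this]; norm_num
  have hsum_b : ∑ j, b j = A.trace.re := by
    have : ∑ j, (A * E j).trace = A.trace := by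
      rw [← Matrix.trace_sum, ← Finset.mul_sum, hsum, Matrix.mul_one]
    calc ∑ j, b j = (∑ j, (A * E j).trace).re := by rw [Complex.re_sum]
      _ = A.trace.re := by rw [this]
  have hCS : (∑ j, Real.sqrt (a j * b j)) ^ 2 ≤ (∑ j, a j) * (∑ j, b j) := by
    apply Finset.sum_sq_le_sum_mul_sum_of_sq_eq_mul
    · exact fun i _ => ha0 i
    · exact fun i _ => hb0 i
    · intro i _
      exact Real.sq_sqrt (mul_nonneg (ha0 i) (hb0 i))
  have hfinal : ∑ j, Real.sqrt (a j * b j) ≤ Real.sqrt 2 * frob X := by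
    have h0 : 0 ≤ ∑ j, Real.sqrt (a j * b j) :=
      Finset.sum_nonneg fun i _ => Real.sqrt_nonneg _
    have : ∑ j, Real.sqrt (a j * b j) ≤ Real.sqrt ((∑ j, a j) * (∑ j, b j)) := by
      rw [Real.le_sqrt h0]
      · exact hCS
      · exact mul_nonneg (Finset.sum_nonneg fun i _ => ha0 i)
          (Finset.sum_nonneg fun i _ => hb0 i)
    calc ∑ j, Real.sqrt (a j * b j) ≤ Real.sqrt ((∑ j, a j) * (∑ j, b j)) := this
      _ = Real.sqrt 2 * frob X := by
          rw [hsum_a, hsum_b, Real.sqrt_mul (by norm_num : (0:ℝ) ≤ 2)]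
          rfl
  calc ∑ j, frob (X * E j) ≤ ∑ j, Real.sqrt (a j * b j) :=
        Finset.sum_le_sum fun j _ => hterm j
    _ ≤ Real.sqrt 2 * frob X := hfinal
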